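/- arXiv:1203.1024 — 3 statements merged into one kernel-verified Lean document; each statement's English description precedes it below -/
import Mathlib

section
/- Let A_1, ..., A_k be events in a family I closed under intersections and unions in which any two events are positively correlated, let c_1, ..., c_k > 0, and X = Σ_i c_i 1_{A_i}, μ = E[X]. Let Δ̄ = Σ_i c_i² Pr(A_i) + Σ_i Σ_{j~i} c_i c_j Pr(A_i ∩ A_j). Then for all 0 ≤ t ≤ μ, Pr(X ≤ μ − t) ≤ exp(−t²/(2Δ̄)). -/
open MeasureTheory Finset Real
open scoped Classical

set_option linter.unusedSectionVars false
set_option maxHeartbeats 1000000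
noncomputable def jind {Ω : Type*} (B : Set Ω) (ω : Ω) : ℝ := if ω ∈ B then 1 else 0

section
variable {Ω : Type*} [MeasurableSpace Ω] (P : Measure Ω) [IsProbabilityMeasure P]

lemma jind_nonneg {B : Set Ω} (ω : Ω) : 0 ≤ jind B ω := by
  unfold jind; split <;> norm_num

lemma jind_le_one {B : Set Ω} (ω : Ω) : jind B ω ≤ 1 := by
  unfold jind; split <;> norm_num

lemma jind_mul_jind {B C : Set Ω} (ω : Ω) : jind B ω * jind C ω = jind (B ∩ C) ω := by
  unfold jind; by_cases hB : ω ∈ B <;> by_cases hC : ω ∈ C <;> simp [hB, hC]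

lemma jind_eq_indicator (B : Set Ω) : jind B = B.indicator (fun _ => (1:ℝ)) := by
  funext ω; simp [jind, Set.indicator_apply]

lemma integrable_jind {B : Set Ω} (hB : MeasurableSet B) : Integrable (jind B) P := by
  rw [jind_eq_indicator]
  exact (integrable_const (1:ℝ)).indicator hB

lemma integral_jind {B : Set Ω} (hB : MeasurableSet B) :
    ∫ ω, jind B ω ∂P = (P B).toReal := by
  rw [jind_eq_indicator, integral_indicator_const (1:ℝ) hB, smul_eq_mul, mul_one]; rfl

end

section
variable {Ω : Type*} [MeasurableSpace Ω] (P : Measure Ω) [IsProbabilityMeasure P]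
variable (I : Set (Set Ω)) {k : ℕ} (A : Fin k → Set Ω)

lemma jpr_union_add_inter (B C : Set Ω) (hC : MeasurableSet C) :
    (P (B ∪ C)).toReal + (P (B ∩ C)).toReal = (P B).toReal + (P C).toReal := by
  rw [← ENNReal.toReal_add (measure_ne_top _ _) (measure_ne_top _ _),
    ← ENNReal.toReal_add (measure_ne_top _ _) (measure_ne_top _ _),
    measure_union_add_inter B hC]

lemma jpr_corr (hcorr : ∀ A ∈ I, ∀ B ∈ I, P (A ∩ B) ≥ P A * P B)
    {B C : Set Ω} (hB : B ∈ I) (hC : C ∈ I) :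
    (P B).toReal * (P C).toReal ≤ (P (B ∩ C)).toReal := by
  rw [← ENNReal.toReal_mul]
  exact ENNReal.toReal_mono (measure_ne_top _ _) (hcorr B hB C hC)

/-- independence propagates to unions -/
lemma jindep_union (hcorr : ∀ A ∈ I, ∀ B ∈ I, P (A ∩ B) ≥ P A * P B)
    (hinter : ∀ A ∈ I, ∀ B ∈ I, A ∩ B ∈ I)
    (hunion : ∀ A ∈ I, ∀ B ∈ I, A ∪ B ∈ I)
    {B C D : Set Ω} (hB : B ∈ I) (hC : C ∈ I) (hD : D ∈ I)
    (hBm : MeasurableSet B) (hCm : MeasurableSet C) (hDm : MeasurableSet D)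
    (h1 : (P (B ∩ C)).toReal = (P B).toReal * (P C).toReal)
    (h2 : (P (B ∩ D)).toReal = (P B).toReal * (P D).toReal) :
    (P (B ∩ (C ∪ D))).toReal = (P B).toReal * (P (C ∪ D)).toReal := by
  have hu := jpr_corr P I hcorr hB (hunion C hC D hD)
  have hi := jpr_corr P I hcorr hB (hinter C hC D hD)
  have e2 := jpr_union_add_inter P C D hDm
  have e1 : (P (B ∩ (C ∪ D))).toReal + (P (B ∩ (C ∩ D))).toReal
      = (P (B ∩ C)).toReal + (P (B ∩ D)).toReal := by
    have r1 : B ∩ (C ∪ D) = (B ∩ C) ∪ (B ∩ D) := Set.inter_union_distrib_left ..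
    have r2 : B ∩ (C ∩ D) = (B ∩ C) ∩ (B ∩ D) := by ext ω; simp; tauto
    rw [r1, r2, jpr_union_add_inter P _ _ (hBm.inter hDm)]
  have e3 : (P B).toReal * (P (C ∪ D)).toReal + (P B).toReal * (P (C ∩ D)).toReal
      = (P B).toReal * (P C).toReal + (P B).toReal * (P D).toReal := by
    rw [← mul_add, ← mul_add, e2]
  linarith [hu, hi, e1, e3, h1, h2]


/-- union over a finset -/
noncomputable def jU (S : Finset (Fin k)) : Set Ω := ⋃ j ∈ S, A j

lemma jU_meas (hAmeas : ∀ i, MeasurableSet (A i)) (S : Finset (Fin k)) :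
    MeasurableSet (jU A S) :=
  S.measurableSet_biUnion (fun j _ => hAmeas j)

lemma jU_mem (hunion : ∀ A ∈ I, ∀ B ∈ I, A ∪ B ∈ I) (hA : ∀ i, A i ∈ I)
    {S : Finset (Fin k)} (hS : S.Nonempty) : jU A S ∈ I := by
  induction hS using Finset.Nonempty.cons_induction with
  | singleton a => simpa [jU] using hA a
  | cons a s h hs ih =>
      have : jU A (Finset.cons a s h) = A a ∪ jU A s := by
        simp [jU, Finset.cons_eq_insert, Set.biUnion_insert]
      rw [this]
      exact hunion _ (hA a) _ ih

lemma jindep_jU (hcorr : ∀ A ∈ I, ∀ B ∈ I, P (A ∩ B) ≥ P A * P B)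
    (hinter : ∀ A ∈ I, ∀ B ∈ I, A ∩ B ∈ I)
    (hunion : ∀ A ∈ I, ∀ B ∈ I, A ∪ B ∈ I)
    (hA : ∀ i, A i ∈ I) (hAmeas : ∀ i, MeasurableSet (A i))
    {B : Set Ω} (hB : B ∈ I) (hBm : MeasurableSet B)
    {S : Finset (Fin k)}
    (hind : ∀ j ∈ S, (P (B ∩ A j)).toReal = (P B).toReal * (P (A j)).toReal) :
    (P (B ∩ jU A S)).toReal = (P B).toReal * (P (jU A S)).toReal := by
  rcases S.eq_empty_or_nonempty with rfl | hS
  · simp [jU]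
  · induction hS using Finset.Nonempty.cons_induction with
    | singleton a => simpa [jU] using hind a (by simp)
    | cons a s h hs ih =>
        have hcons : jU A (Finset.cons a s h) = A a ∪ jU A s := by
          simp [jU, Finset.cons_eq_insert, Set.biUnion_insert]
        rw [hcons]
        exact jindep_union P I hcorr hinter hunion hB (hA a) (jU_mem I A hunion hA hs)
          hBm (hAmeas a) (jU_meas A hAmeas s)
          (hind a (by simp)) (ih (fun j hj => hind j (by simp [hj])))


end
noncomputable def jg {Ω : Type*} {k : ℕ} (A : Fin k → Set Ω) (q : Fin k → ℝ)
    (T : Finset (Fin k)) (ω : Ω) : ℝ := ∏ j ∈ T, (1 - q j * jind (A j) ω)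

noncomputable def jw {k : ℕ} (q : Fin k → ℝ) (T S : Finset (Fin k)) : ℝ :=
  (∏ j ∈ S, q j) * ∏ j ∈ T \ S, (1 - q j)

lemma jw_nonneg {k : ℕ} {q : Fin k → ℝ} (hq : ∀ j, 0 ≤ q j ∧ q j ≤ 1)
    (T S : Finset (Fin k)) : 0 ≤ jw q T S := by
  apply mul_nonneg
  · exact Finset.prod_nonneg fun j _ => (hq j).1
  · exact Finset.prod_nonneg fun j _ => by linarith [(hq j).2]

lemma prod_one_sub_jind {Ω : Type*} {k : ℕ} (A : Fin k → Set Ω) (S : Finset (Fin k)) (ω : Ω) :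
    ∏ j ∈ S, (1 - jind (A j) ω) = 1 - jind (jU A S) ω := by
  by_cases h : ω ∈ jU A S
  · obtain ⟨j, hj, hωj⟩ : ∃ j ∈ S, ω ∈ A j := by
      simpa [jU, Set.mem_iUnion] using h
    rw [Finset.prod_eq_zero hj (by simp [jind, hωj])]
    simp [jind, h]
  · have hnot : ∀ j ∈ S, ω ∉ A j := by
      intro j hj hωj
      exact h (by simp [jU, Set.mem_iUnion]; exact ⟨j, hj, hωj⟩)
    rw [Finset.prod_eq_one (fun j hj => by simp [jind, hnot j hj])]
    simp [jind, h]

lemma jg_expand {Ω : Type*} {k : ℕ} (A : Fin k → Set Ω) (q : Fin k → ℝ)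
    (T : Finset (Fin k)) (ω : Ω) :
    jg A q T ω = ∑ S ∈ T.powerset, jw q T S * (1 - jind (jU A S) ω) := by
  have h : ∀ j ∈ T, 1 - q j * jind (A j) ω
      = q j * (1 - jind (A j) ω) + (1 - q j) := fun j _ => by ring
  rw [jg, Finset.prod_congr rfl h, Finset.prod_add]
  refine Finset.sum_congr rfl fun S hS => ?_
  rw [Finset.prod_mul_distrib, prod_one_sub_jind A S ω, jw]
  ring
section
variable {Ω : Type*} [MeasurableSpace Ω] (P : Measure Ω) [IsProbabilityMeasure P]
variable (I : Set (Set Ω)) {k : ℕ} (A : Fin k → Set Ω)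

lemma jg_ptwise (hAmeas : ∀ i, MeasurableSet (A i)) (q : Fin k → ℝ) (T : Finset (Fin k))
    {C : Set Ω} (ω : Ω) :
    jind C ω * jg A q T ω
      = ∑ S ∈ T.powerset, jw q T S * (jind C ω - jind (C ∩ jU A S) ω) := by
  rw [jg_expand, Finset.mul_sum]
  refine Finset.sum_congr rfl fun S hS => ?_
  rw [← jind_mul_jind (B := C) (C := jU A S)]
  ring

lemma integrable_jind_mul_jg (hAmeas : ∀ i, MeasurableSet (A i)) (q : Fin k → ℝ)
    (T : Finset (Fin k)) {C : Set Ω} (hCm : MeasurableSet C) :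
    Integrable (fun ω => jind C ω * jg A q T ω) P := by
  have : (fun ω => jind C ω * jg A q T ω)
      = fun ω => ∑ S ∈ T.powerset, jw q T S * (jind C ω - jind (C ∩ jU A S) ω) :=
    funext fun ω => jg_ptwise A hAmeas q T ω
  rw [this]
  exact integrable_finset_sum _ fun S _ =>
    (((integrable_jind P hCm).sub (integrable_jind P (hCm.inter (jU_meas A hAmeas S)))).const_mul _)

lemma integral_jind_mul_jg (hAmeas : ∀ i, MeasurableSet (A i)) (q : Fin k → ℝ)
    (T : Finset (Fin k)) {C : Set Ω} (hCm : MeasurableSet C) :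
    ∫ ω, jind C ω * jg A q T ω ∂P
      = ∑ S ∈ T.powerset, jw q T S * ((P C).toReal - (P (C ∩ jU A S)).toReal) := by
  have h : (fun ω => jind C ω * jg A q T ω)
      = fun ω => ∑ S ∈ T.powerset, jw q T S * (jind C ω - jind (C ∩ jU A S) ω) :=
    funext fun ω => jg_ptwise A hAmeas q T ω
  have hint := integral_finset_sum (μ := P) T.powerset
    (f := fun S ω => jw q T S * (jind C ω - jind (C ∩ jU A S) ω))
    (fun S _ =>
      (((integrable_jind P hCm).sub (integrable_jind P (hCm.inter (jU_meas A hAmeas S)))).const_mul _))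
  rw [h, hint]
  refine Finset.sum_congr rfl fun S hS => ?_
  rw [integral_const_mul, integral_sub (integrable_jind P hCm)
    (integrable_jind P (hCm.inter (jU_meas A hAmeas S))), integral_jind P hCm,
    integral_jind P (hCm.inter (jU_meas A hAmeas S))]

lemma integrable_jg (hAmeas : ∀ i, MeasurableSet (A i)) (q : Fin k → ℝ) (T : Finset (Fin k)) :
    Integrable (fun ω => jg A q T ω) P := by
  have : (fun ω => jg A q T ω) = fun ω => jind (Set.univ) ω * jg A q T ω := by
    funext ω; simp [jind]
  rw [this]
  exact integrable_jind_mul_jg P A hAmeas q T MeasurableSet.univ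

lemma integral_jg (hAmeas : ∀ i, MeasurableSet (A i)) (q : Fin k → ℝ) (T : Finset (Fin k)) :
    ∫ ω, jg A q T ω ∂P = ∑ S ∈ T.powerset, jw q T S * (1 - (P (jU A S)).toReal) := by
  have : (fun ω => jg A q T ω) = fun ω => jind (Set.univ) ω * jg A q T ω := by
    funext ω; simp [jind]
  rw [this, integral_jind_mul_jg P A hAmeas q T MeasurableSet.univ]
  simp [Set.univ_inter]

/-- Lemma A : negative correlation of a family member with the decreasing product -/
lemma lemA (hcorr : ∀ A ∈ I, ∀ B ∈ I, P (A ∩ B) ≥ P A * P B)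
    (hunion : ∀ A ∈ I, ∀ B ∈ I, A ∪ B ∈ I)
    (hA : ∀ i, A i ∈ I) (hAmeas : ∀ i, MeasurableSet (A i))
    {q : Fin k → ℝ} (hq : ∀ j, 0 ≤ q j ∧ q j ≤ 1) (T : Finset (Fin k))
    {C : Set Ω} (hC : C ∈ I) (hCm : MeasurableSet C) :
    ∫ ω, jind C ω * jg A q T ω ∂P ≤ (P C).toReal * ∫ ω, jg A q T ω ∂P := by
  rw [integral_jind_mul_jg P A hAmeas q T hCm, integral_jg P A hAmeas q T, Finset.mul_sum]
  refine Finset.sum_le_sum fun S hS => ?_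
  have hw := jw_nonneg hq T S
  have key : (P C).toReal * (P (jU A S)).toReal ≤ (P (C ∩ jU A S)).toReal := by
    rcases S.eq_empty_or_nonempty with rfl | hSne
    · simp [jU]
    · exact jpr_corr P I hcorr hC (jU_mem I A hunion hA hSne)
  have : (P C).toReal - (P (C ∩ jU A S)).toReal
      ≤ (P C).toReal * (1 - (P (jU A S)).toReal) := by nlinarith
  calc jw q T S * ((P C).toReal - (P (C ∩ jU A S)).toReal)
      ≤ jw q T S * ((P C).toReal * (1 - (P (jU A S)).toReal)) := by
        exact mul_le_mul_of_nonneg_left this hw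
    _ = (P C).toReal * (jw q T S * (1 - (P (jU A S)).toReal)) := by ring

/-- Lemma B : exact independence from pairwise independence -/
lemma lemB (hcorr : ∀ A ∈ I, ∀ B ∈ I, P (A ∩ B) ≥ P A * P B)
    (hinter : ∀ A ∈ I, ∀ B ∈ I, A ∩ B ∈ I)
    (hunion : ∀ A ∈ I, ∀ B ∈ I, A ∪ B ∈ I)
    (hA : ∀ i, A i ∈ I) (hAmeas : ∀ i, MeasurableSet (A i))
    (q : Fin k → ℝ) (T : Finset (Fin k))
    {C : Set Ω} (hC : C ∈ I) (hCm : MeasurableSet C)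
    (hind : ∀ j ∈ T, (P (C ∩ A j)).toReal = (P C).toReal * (P (A j)).toReal) :
    ∫ ω, jind C ω * jg A q T ω ∂P = (P C).toReal * ∫ ω, jg A q T ω ∂P := by
  rw [integral_jind_mul_jg P A hAmeas q T hCm, integral_jg P A hAmeas q T, Finset.mul_sum]
  refine Finset.sum_congr rfl fun S hS => ?_
  have key : (P (C ∩ jU A S)).toReal = (P C).toReal * (P (jU A S)).toReal :=
    jindep_jU P I A hcorr hinter hunion hA hAmeas hC hCm
      (fun j hj => hind j (Finset.mem_powerset.1 hS hj))
  rw [key]; ring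

end
section
variable {Ω : Type*} [MeasurableSpace Ω] (P : Measure Ω) [IsProbabilityMeasure P]
variable {k : ℕ} (A : Fin k → Set Ω) (c : Fin k → ℝ)

noncomputable def jcell (S : Finset (Fin k)) : Set Ω :=
  ⋂ i : Fin k, (if i ∈ S then A i else (A i)ᶜ)

noncomputable def jx (S : Finset (Fin k)) : ℝ := ∑ i ∈ S, c i

lemma jcell_meas (hAmeas : ∀ i, MeasurableSet (A i)) (S : Finset (Fin k)) :
    MeasurableSet (jcell A S) := by
  apply MeasurableSet.iInter
  intro i
  by_cases h : i ∈ S <;> simp [h, hAmeas i, (hAmeas i).compl]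

lemma mem_jcell (S : Finset (Fin k)) (ω : Ω) :
    ω ∈ jcell A S ↔ S = Finset.univ.filter (fun i => ω ∈ A i) := by
  simp only [jcell, Set.mem_iInter, Finset.ext_iff, Finset.mem_filter, Finset.mem_univ,
    true_and]
  constructor
  · intro h i
    have := h i
    by_cases hi : i ∈ S <;> simp [hi] at this ⊢ <;> tauto
  · intro h i
    by_cases hi : i ∈ S <;> simp [hi] <;> rw [h] at hi <;> tauto

lemma cell_decomp (ψ : Finset (Fin k) → ℝ) (ω : Ω) :
    ∑ S : Finset (Fin k), jind (jcell A S) ω * ψ S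
      = ψ (Finset.univ.filter (fun i => ω ∈ A i)) := by
  have h : ∀ S : Finset (Fin k), jind (jcell A S) ω * ψ S
      = if S = Finset.univ.filter (fun i => ω ∈ A i) then ψ S else 0 := by
    intro S
    by_cases hS : S = Finset.univ.filter (fun i => ω ∈ A i)
    · subst hS
      simp [jind, (mem_jcell A _ ω).2 rfl]
    · have : ω ∉ jcell A S := fun hω => hS ((mem_jcell A S ω).1 hω)
      simp [jind, this, hS]
  rw [Finset.sum_congr rfl (fun S _ => h S)]
  simp

lemma Y_val (T : Finset (Fin k)) (ω : Ω) :
    ∑ j ∈ T, c j * jind (A j) ω = ∑ j ∈ T.filter (fun j => ω ∈ A j), c j := by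
  rw [Finset.sum_filter]
  refine Finset.sum_congr rfl fun j _ => ?_
  by_cases h : ω ∈ A j <;> simp [jind, h]

lemma X_val (ω : Ω) :
    ∑ j : Fin k, c j * jind (A j) ω = jx c (Finset.univ.filter (fun j => ω ∈ A j)) := by
  rw [jx, ← Y_val]

/-- pointwise cell expansion of `h(X) · 1_C` -/
lemma cell_expand (C : Set Ω) (ψ : Finset (Fin k) → ℝ) (ω : Ω) :
    jind C ω * ψ (Finset.univ.filter (fun i => ω ∈ A i))
      = ∑ S : Finset (Fin k), jind (C ∩ jcell A S) ω * ψ S := by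
  rw [← cell_decomp A ψ ω, Finset.mul_sum]
  refine Finset.sum_congr rfl fun S _ => ?_
  rw [← jind_mul_jind]; ring

lemma integrable_jind_mul_expX (hAmeas : ∀ i, MeasurableSet (A i))
    {C : Set Ω} (hCm : MeasurableSet C) (s : ℝ) :
    Integrable (fun ω => jind C ω * Real.exp (-(s * ∑ i : Fin k, c i * jind (A i) ω))) P := by
  have h : (fun ω => jind C ω * Real.exp (-(s * ∑ i : Fin k, c i * jind (A i) ω)))
      = fun ω => ∑ S : Finset (Fin k), jind (C ∩ jcell A S) ω * Real.exp (-(s * jx c S)) := by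
    funext ω
    rw [X_val A c ω, cell_expand A C (fun S => Real.exp (-(s * jx c S))) ω]
  rw [h]
  exact integrable_finset_sum _ fun S _ =>
    (integrable_jind P (hCm.inter (jcell_meas A hAmeas S))).mul_const _

lemma integral_jind_mul_expX (hAmeas : ∀ i, MeasurableSet (A i))
    {C : Set Ω} (hCm : MeasurableSet C) (s : ℝ) :
    ∫ ω, jind C ω * Real.exp (-(s * ∑ i : Fin k, c i * jind (A i) ω)) ∂P
      = ∑ S : Finset (Fin k), (P (C ∩ jcell A S)).toReal * Real.exp (-(s * jx c S)) := by
  have h : (fun ω => jind C ω * Real.exp (-(s * ∑ i : Fin k, c i * jind (A i) ω)))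
      = fun ω => ∑ S : Finset (Fin k), jind (C ∩ jcell A S) ω * Real.exp (-(s * jx c S)) := by
    funext ω
    rw [X_val A c ω, cell_expand A C (fun S => Real.exp (-(s * jx c S))) ω]
  rw [h, integral_finset_sum _ (fun S _ =>
    (integrable_jind P (hCm.inter (jcell_meas A hAmeas S))).mul_const _)]
  refine Finset.sum_congr rfl fun S _ => ?_
  rw [integral_mul_const, integral_jind P (hCm.inter (jcell_meas A hAmeas S))]

end
section
variable {Ω : Type*} [MeasurableSpace Ω] (P : Measure Ω) [IsProbabilityMeasure P]
variable {k : ℕ} (A : Fin k → Set Ω) (c : Fin k → ℝ)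

lemma cellfun_ptwise (ψ : Finset (Fin k) → ℝ) (ω : Ω) :
    ψ (Finset.univ.filter (fun i => ω ∈ A i))
      = ∑ S : Finset (Fin k), jind (jcell A S) ω * ψ S := (cell_decomp A ψ ω).symm

lemma integrable_cellfun (hAmeas : ∀ i, MeasurableSet (A i)) (ψ : Finset (Fin k) → ℝ) :
    Integrable (fun ω => ψ (Finset.univ.filter (fun i => ω ∈ A i))) P := by
  have h : (fun ω => ψ (Finset.univ.filter (fun i => ω ∈ A i)))
      = fun ω => ∑ S : Finset (Fin k), jind (jcell A S) ω * ψ S :=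
    funext fun ω => cellfun_ptwise A ψ ω
  rw [h]
  exact integrable_finset_sum _ fun S _ =>
    (integrable_jind P (jcell_meas A hAmeas S)).mul_const _

lemma integral_cellfun (hAmeas : ∀ i, MeasurableSet (A i)) (ψ : Finset (Fin k) → ℝ) :
    ∫ ω, ψ (Finset.univ.filter (fun i => ω ∈ A i)) ∂P
      = ∑ S : Finset (Fin k), (P (jcell A S)).toReal * ψ S := by
  have h : (fun ω => ψ (Finset.univ.filter (fun i => ω ∈ A i)))
      = fun ω => ∑ S : Finset (Fin k), jind (jcell A S) ω * ψ S :=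
    funext fun ω => cellfun_ptwise A ψ ω
  rw [h, integral_finset_sum _ (fun S _ =>
    (integrable_jind P (jcell_meas A hAmeas S)).mul_const _)]
  refine Finset.sum_congr rfl fun S _ => ?_
  rw [integral_mul_const, integral_jind P (jcell_meas A hAmeas S)]

noncomputable def jF (s : ℝ) : ℝ :=
  ∑ S : Finset (Fin k), (P (jcell A S)).toReal * Real.exp (-(s * jx c S))

lemma jF_eq_integral (hAmeas : ∀ i, MeasurableSet (A i)) (s : ℝ) :
    jF P A c s = ∫ ω, Real.exp (-(s * ∑ i : Fin k, c i * jind (A i) ω)) ∂P := by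
  have h : (fun ω => Real.exp (-(s * ∑ i : Fin k, c i * jind (A i) ω)))
      = fun ω => (fun S => Real.exp (-(s * jx c S))) (Finset.univ.filter (fun i => ω ∈ A i)) := by
    funext ω; rw [X_val A c ω]
  rw [jF, h]
  exact (integral_cellfun P A hAmeas (fun S => Real.exp (-(s * jx c S)))).symm

lemma integrable_expX (hAmeas : ∀ i, MeasurableSet (A i)) (s : ℝ) :
    Integrable (fun ω => Real.exp (-(s * ∑ i : Fin k, c i * jind (A i) ω))) P := by
  have h : (fun ω => Real.exp (-(s * ∑ i : Fin k, c i * jind (A i) ω)))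
      = fun ω => (fun S => Real.exp (-(s * jx c S))) (Finset.univ.filter (fun i => ω ∈ A i)) := by
    funext ω; rw [X_val A c ω]
  rw [h]; exact integrable_cellfun P A hAmeas (fun S => Real.exp (-(s * jx c S)))

lemma integral_X_expX (hAmeas : ∀ i, MeasurableSet (A i)) (s : ℝ) :
    ∫ ω, (∑ i : Fin k, c i * jind (A i) ω) * Real.exp (-(s * ∑ i : Fin k, c i * jind (A i) ω)) ∂P
      = ∑ S : Finset (Fin k), (P (jcell A S)).toReal * (jx c S * Real.exp (-(s * jx c S))) := by
  have h : (fun ω => (∑ i : Fin k, c i * jind (A i) ω) * Real.exp (-(s * ∑ i : Fin k, c i * jind (A i) ω)))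
      = fun ω => (fun S => jx c S * Real.exp (-(s * jx c S))) (Finset.univ.filter (fun i => ω ∈ A i)) := by
    funext ω; rw [X_val A c ω]
  rw [h]
  exact integral_cellfun P A hAmeas (fun S => jx c S * Real.exp (-(s * jx c S)))

lemma integrable_X_expX (hAmeas : ∀ i, MeasurableSet (A i)) (s : ℝ) :
    Integrable (fun ω => (∑ i : Fin k, c i * jind (A i) ω)
      * Real.exp (-(s * ∑ i : Fin k, c i * jind (A i) ω))) P := by
  have h : (fun ω => (∑ i : Fin k, c i * jind (A i) ω) * Real.exp (-(s * ∑ i : Fin k, c i * jind (A i) ω)))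
      = fun ω => (fun S => jx c S * Real.exp (-(s * jx c S))) (Finset.univ.filter (fun i => ω ∈ A i)) := by
    funext ω; rw [X_val A c ω]
  rw [h]; exact integrable_cellfun P A hAmeas (fun S => jx c S * Real.exp (-(s * jx c S)))

lemma hasDerivAt_jF (s : ℝ) :
    HasDerivAt (jF P A c)
      (-∑ S : Finset (Fin k), (P (jcell A S)).toReal * (jx c S * Real.exp (-(s * jx c S)))) s := by
  have h : ∀ S : Finset (Fin k),
      HasDerivAt (fun u => (P (jcell A S)).toReal * Real.exp (-(u * jx c S)))
        (-((P (jcell A S)).toReal * (jx c S * Real.exp (-(s * jx c S))))) s := by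
    intro S
    have h1 : HasDerivAt (fun u : ℝ => -(u * jx c S)) (-(jx c S)) s := by
      have h0 := ((hasDerivAt_id s).mul_const (jx c S)).neg; simp only [one_mul] at h0; exact h0
    have h2 := (h1.exp).const_mul ((P (jcell A S)).toReal)
    refine h2.congr_deriv ?_
    ring
  have hsum := HasDerivAt.fun_sum (fun S (_ : S ∈ (Finset.univ : Finset (Finset (Fin k)))) => h S)
  rw [← Finset.sum_neg_distrib]
  exact hsum

lemma exp_eq_jg (s : ℝ) (T : Finset (Fin k)) (ω : Ω) :
    Real.exp (-(s * ∑ j ∈ T, c j * jind (A j) ω))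
      = jg A (fun j => 1 - Real.exp (-(s * c j))) T ω := by
  have h : -(s * ∑ j ∈ T, c j * jind (A j) ω) = ∑ j ∈ T, -(s * (c j * jind (A j) ω)) := by
    rw [Finset.mul_sum, ← Finset.sum_neg_distrib]
  rw [h, Real.exp_sum, jg]
  refine Finset.prod_congr rfl fun j _ => ?_
  by_cases hj : ω ∈ A j
  · simp [jind, hj]
  · simp [jind, hj]

end
section
variable {Ω : Type*} [MeasurableSpace Ω] (P : Measure Ω) [IsProbabilityMeasure P]
variable (I : Set (Set Ω)) {k : ℕ} (A : Fin k → Set Ω) (c : Fin k → ℝ)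

lemma jq_bounds (c : Fin k → ℝ) (hc : ∀ i, 0 < c i) {s : ℝ} (hs : 0 ≤ s) :
    ∀ j, 0 ≤ 1 - Real.exp (-(s * c j)) ∧ 1 - Real.exp (-(s * c j)) ≤ 1 := by
  intro j
  have h1 : Real.exp (-(s * c j)) ≤ 1 := by
    rw [Real.exp_le_one_iff]
    have := (hc j).le
    nlinarith
  have h2 : 0 < Real.exp (-(s * c j)) := Real.exp_pos _
  constructor <;> linarith

/-- The key inequality : `E[X e^{-sX}] ≥ (μ - sΔ̄) E[e^{-sX}]`. -/
lemma key_ineq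
    (hcorr : ∀ A ∈ I, ∀ B ∈ I, P (A ∩ B) ≥ P A * P B)
    (hinter : ∀ A ∈ I, ∀ B ∈ I, A ∩ B ∈ I)
    (hunion : ∀ A ∈ I, ∀ B ∈ I, A ∪ B ∈ I)
    (hA : ∀ i, A i ∈ I) (hAmeas : ∀ i, MeasurableSet (A i))
    (hc : ∀ i, 0 < c i)
    (sim : Fin k → Fin k → Prop)
    (hsim : ∀ i j, sim i j ↔ i ≠ j ∧ P (A i ∩ A j) ≠ P (A i) * P (A j))
    (Δbar : ℝ)
    (hΔbar : Δbar = ∑ i : Fin k, (c i) ^ 2 * (P (A i)).toReal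
        + ∑ i : Fin k, ∑ j ∈ Finset.univ.filter (fun j => sim i j),
            c i * c j * (P (A i ∩ A j)).toReal)
    (s : ℝ) (hs : 0 ≤ s) :
    (∑ i : Fin k, c i * (P (A i)).toReal - s * Δbar) * jF P A c s
      ≤ ∫ ω, (∑ i : Fin k, c i * jind (A i) ω)
          * Real.exp (-(s * ∑ i : Fin k, c i * jind (A i) ω)) ∂P := by
  classical
  set q : Fin k → ℝ := fun j => 1 - Real.exp (-(s * c j)) with hq
  have hqb := jq_bounds c hc hs
  -- neighborhoods
  set D : Fin k → Finset (Fin k) := fun i => Finset.univ.filter (fun j => j = i ∨ sim i j) with hD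
  set T : Fin k → Finset (Fin k) := fun i => Finset.univ.filter (fun j => ¬(j = i ∨ sim i j)) with hT
  -- the Y_i functions
  set Y : Fin k → Ω → ℝ := fun i ω => ∑ j ∈ T i, c j * jind (A j) ω with hY
  set Xf : Ω → ℝ := fun ω => ∑ i : Fin k, c i * jind (A i) ω with hXf
  have hXsplit : ∀ i ω, Xf ω = Y i ω + (∑ j ∈ D i, c j * jind (A j) ω) := by
    intro i ω
    rw [hXf, hY]
    simp only
    rw [add_comm, ← Finset.sum_filter_add_sum_filter_not Finset.univ (fun j => j = i ∨ sim i j)]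
  have hYleX : ∀ i ω, Y i ω ≤ Xf ω := by
    intro i ω
    rw [hXsplit i ω]
    have : 0 ≤ ∑ j ∈ D i, c j * jind (A j) ω :=
      Finset.sum_nonneg fun j _ => mul_nonneg (hc j).le (jind_nonneg ω)
    linarith
  -- exp(-(s * Y i ω)) = jg ...
  have hYg : ∀ i ω, Real.exp (-(s * Y i ω)) = jg A q (T i) ω := fun i ω => exp_eq_jg A c s (T i) ω
  -- integrability of all pieces
  have hintYC : ∀ (i : Fin k) (C : Set Ω), MeasurableSet C →
      Integrable (fun ω => jind C ω * Real.exp (-(s * Y i ω))) P := by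
    intro i C hCm
    have : (fun ω => jind C ω * Real.exp (-(s * Y i ω)))
        = fun ω => jind C ω * jg A q (T i) ω := by
      funext ω; rw [hYg i ω]
    rw [this]
    exact integrable_jind_mul_jg P A hAmeas q (T i) hCm
  have hintY : ∀ i : Fin k, Integrable (fun ω => Real.exp (-(s * Y i ω))) P := by
    intro i
    have : (fun ω => Real.exp (-(s * Y i ω))) = fun ω => jg A q (T i) ω := by
      funext ω; rw [hYg i ω]
    rw [this]
    exact integrable_jg P A hAmeas q (T i)
  -- Step 1 : per-i lower bound
  have main : ∀ i : Fin k,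
      ((P (A i)).toReal - s * ∑ j ∈ D i, c j * (P (A i ∩ A j)).toReal) * jF P A c s
        ≤ ∫ ω, jind (A i) ω * Real.exp (-(s * Xf ω)) ∂P := by
    intro i
    set Δi : ℝ := ∑ j ∈ D i, c j * (P (A i ∩ A j)).toReal with hΔi
    -- pointwise inequality
    have ptwise : ∀ ω, jind (A i) ω * Real.exp (-(s * Y i ω))
          - s * ∑ j ∈ D i, c j * (jind (A i ∩ A j) ω * Real.exp (-(s * Y i ω)))
        ≤ jind (A i) ω * Real.exp (-(s * Xf ω)) := by
      intro ω
      set Z : ℝ := ∑ j ∈ D i, c j * jind (A j) ω with hZ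
      have hZnn : 0 ≤ Z := Finset.sum_nonneg fun j _ => mul_nonneg (hc j).le (jind_nonneg ω)
      have hsplit : Real.exp (-(s * Xf ω)) = Real.exp (-(s * Y i ω)) * Real.exp (-(s * Z)) := by
        rw [← Real.exp_add, hXsplit i ω]; ring_nf; rw [hZ]
      have hexp : 1 - s * Z ≤ Real.exp (-(s * Z)) := by
        have := Real.add_one_le_exp (-(s * Z))
        linarith
      have hnn : 0 ≤ jind (A i) ω * Real.exp (-(s * Y i ω)) :=
        mul_nonneg (jind_nonneg ω) (Real.exp_pos _).le
      have step : jind (A i) ω * Real.exp (-(s * Y i ω)) * (1 - s * Z)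
          ≤ jind (A i) ω * Real.exp (-(s * Xf ω)) := by
        rw [hsplit, ← mul_assoc]
        exact mul_le_mul_of_nonneg_left hexp hnn
      refine le_trans (le_of_eq ?_) step
      have hZexpand : jind (A i) ω * Z
          = ∑ j ∈ D i, c j * jind (A i ∩ A j) ω := by
        rw [hZ, Finset.mul_sum]
        refine Finset.sum_congr rfl fun j _ => ?_
        rw [← jind_mul_jind]; ring
      have hsum2 : ∑ j ∈ D i, c j * (jind (A i ∩ A j) ω * Real.exp (-(s * Y i ω)))
          = (jind (A i) ω * Z) * Real.exp (-(s * Y i ω)) := by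
        rw [hZexpand]
        rw [Finset.sum_mul]
        refine Finset.sum_congr rfl fun j _ => by ring
      calc jind (A i) ω * Real.exp (-(s * Y i ω))
            - s * ∑ j ∈ D i, c j * (jind (A i ∩ A j) ω * Real.exp (-(s * Y i ω)))
          = jind (A i) ω * Real.exp (-(s * Y i ω))
            - s * ((jind (A i) ω * Z) * Real.exp (-(s * Y i ω))) := by rw [hsum2]
        _ = jind (A i) ω * Real.exp (-(s * Y i ω)) * (1 - s * Z) := by ring
    -- integrate the pointwise inequality
    have int_lhs : Integrable (fun ω => jind (A i) ω * Real.exp (-(s * Y i ω))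
          - s * ∑ j ∈ D i, c j * (jind (A i ∩ A j) ω * Real.exp (-(s * Y i ω)))) P := by
      apply Integrable.sub (hintYC i (A i) (hAmeas i))
      apply Integrable.const_mul
      exact integrable_finset_sum _ fun j _ =>
        (hintYC i (A i ∩ A j) ((hAmeas i).inter (hAmeas j))).const_mul _
    have int_rhs : Integrable (fun ω => jind (A i) ω * Real.exp (-(s * Xf ω))) P :=
      integrable_jind_mul_expX P A c hAmeas (hAmeas i) s
    have integ := integral_mono int_lhs int_rhs ptwise
    rw [integral_sub (hintYC i (A i) (hAmeas i))
        (((integrable_finset_sum _ fun j _ =>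
          (hintYC i (A i ∩ A j) ((hAmeas i).inter (hAmeas j))).const_mul (c j))).const_mul s)]
      at integ
    rw [integral_const_mul, integral_finset_sum _ (fun j _ =>
      (hintYC i (A i ∩ A j) ((hAmeas i).inter (hAmeas j))).const_mul (c j))] at integ
    simp only [integral_const_mul] at integ
    -- apply lemB and lemA
    have hlemB : ∫ ω, jind (A i) ω * Real.exp (-(s * Y i ω)) ∂P
        = (P (A i)).toReal * ∫ ω, Real.exp (-(s * Y i ω)) ∂P := by
      have h1 : (fun ω => jind (A i) ω * Real.exp (-(s * Y i ω)))
          = fun ω => jind (A i) ω * jg A q (T i) ω := by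
        funext ω; rw [hYg i ω]
      have h2 : (fun ω => Real.exp (-(s * Y i ω))) = fun ω => jg A q (T i) ω := by
        funext ω; rw [hYg i ω]
      rw [h1, h2]
      apply lemB P I A hcorr hinter hunion hA hAmeas q (T i) (hA i) (hAmeas i)
      intro j hj
      rw [hT] at hj
      simp only [Finset.mem_filter, Finset.mem_univ, true_and] at hj
      push_neg at hj
      obtain ⟨hne, hnsim⟩ := hj
      have : ¬ sim i j := hnsim
      rw [hsim i j] at this
      push_neg at this
      have hije : P (A i ∩ A j) = P (A i) * P (A j) := this (Ne.symm hne)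
      rw [hije, ENNReal.toReal_mul]
    have hlemA : ∀ j ∈ D i, ∫ ω, jind (A i ∩ A j) ω * Real.exp (-(s * Y i ω)) ∂P
        ≤ (P (A i ∩ A j)).toReal * ∫ ω, Real.exp (-(s * Y i ω)) ∂P := by
      intro j _
      have h1 : (fun ω => jind (A i ∩ A j) ω * Real.exp (-(s * Y i ω)))
          = fun ω => jind (A i ∩ A j) ω * jg A q (T i) ω := by
        funext ω; rw [hYg i ω]
      have h2 : (fun ω => Real.exp (-(s * Y i ω))) = fun ω => jg A q (T i) ω := by
        funext ω; rw [hYg i ω]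
      rw [h1, h2]
      exact lemA P I A hcorr hunion hA hAmeas hqb (T i)
        (hinter _ (hA i) _ (hA j)) ((hAmeas i).inter (hAmeas j))
    -- combine
    set G : ℝ := ∫ ω, Real.exp (-(s * Y i ω)) ∂P with hG
    have hGnn : 0 ≤ G := integral_nonneg fun ω => (Real.exp_pos _).le
    have hFleG : jF P A c s ≤ G := by
      rw [jF_eq_integral P A c hAmeas s]
      apply integral_mono (integrable_expX P A c hAmeas s) (hintY i)
      intro ω
      apply Real.exp_le_exp.2
      have h := hYleX i ω
      simp only [hXf] at h
      nlinarith [h, hs]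
    have hFnn : 0 ≤ jF P A c s := by
      rw [jF_eq_integral P A c hAmeas s]
      exact integral_nonneg fun ω => (Real.exp_pos _).le
    have step2 : ((P (A i)).toReal - s * Δi) * G
        ≤ ∫ ω, jind (A i) ω * Real.exp (-(s * Xf ω)) ∂P := by
      have hsum : ∑ j ∈ D i, c j * ∫ ω, jind (A i ∩ A j) ω * Real.exp (-(s * Y i ω)) ∂P
          ≤ ∑ j ∈ D i, c j * ((P (A i ∩ A j)).toReal * G) :=
        Finset.sum_le_sum fun j hj =>
          mul_le_mul_of_nonneg_left (hlemA j hj) (hc j).le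
      have : (P (A i)).toReal * G - s * ∑ j ∈ D i, c j * ((P (A i ∩ A j)).toReal * G)
          ≤ ∫ ω, jind (A i) ω * Real.exp (-(s * Xf ω)) ∂P := by
        rw [← hlemB]
        have hmul : s * ∑ j ∈ D i, c j * ∫ ω, jind (A i ∩ A j) ω * Real.exp (-(s * Y i ω)) ∂P
            ≤ s * ∑ j ∈ D i, c j * ((P (A i ∩ A j)).toReal * G) :=
          mul_le_mul_of_nonneg_left hsum hs
        linarith [integ]
      have hre : ∑ j ∈ D i, c j * ((P (A i ∩ A j)).toReal * G) = Δi * G := by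
        rw [hΔi, Finset.sum_mul]
        exact Finset.sum_congr rfl fun j _ => by ring
      rw [hre] at this
      calc ((P (A i)).toReal - s * Δi) * G
          = (P (A i)).toReal * G - s * (Δi * G) := by ring
        _ ≤ _ := this
    by_cases hsign : 0 ≤ (P (A i)).toReal - s * Δi
    · calc ((P (A i)).toReal - s * Δi) * jF P A c s
          ≤ ((P (A i)).toReal - s * Δi) * G := mul_le_mul_of_nonneg_left hFleG hsign
        _ ≤ _ := step2
    · push_neg at hsign
      have hnn : 0 ≤ ∫ ω, jind (A i) ω * Real.exp (-(s * Xf ω)) ∂P :=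
        integral_nonneg fun ω => mul_nonneg (jind_nonneg ω) (Real.exp_pos _).le
      nlinarith
  -- Step 2 : sum over i
  have sum_eq : ∑ i : Fin k, c i * ∫ ω, jind (A i) ω * Real.exp (-(s * Xf ω)) ∂P
      = ∫ ω, Xf ω * Real.exp (-(s * Xf ω)) ∂P := by
    have h : (fun ω => Xf ω * Real.exp (-(s * Xf ω)))
        = fun ω => ∑ i : Fin k, c i * (jind (A i) ω * Real.exp (-(s * Xf ω))) := by
      funext ω
      have : Xf ω = ∑ i : Fin k, c i * jind (A i) ω := by rw [hXf]
      rw [this]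
      rw [Finset.sum_mul]
      exact Finset.sum_congr rfl fun i _ => by ring
    rw [h, integral_finset_sum _ (fun i _ =>
      (integrable_jind_mul_expX P A c hAmeas (hAmeas i) s).const_mul (c i))]
    simp only [integral_const_mul]
    rfl
  have sum_ineq : ∑ i : Fin k, c i * (((P (A i)).toReal
        - s * ∑ j ∈ D i, c j * (P (A i ∩ A j)).toReal) * jF P A c s)
      ≤ ∑ i : Fin k, c i * ∫ ω, jind (A i) ω * Real.exp (-(s * Xf ω)) ∂P :=
    Finset.sum_le_sum fun i _ => mul_le_mul_of_nonneg_left (main i) (hc i).le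
  rw [sum_eq] at sum_ineq
  refine le_trans (le_of_eq ?_) sum_ineq
  -- algebraic identity with Δbar
  have hDsum : ∀ i : Fin k, ∑ j ∈ D i, c j * (P (A i ∩ A j)).toReal
      = c i * (P (A i)).toReal + ∑ j ∈ Finset.univ.filter (fun j => sim i j),
          c j * (P (A i ∩ A j)).toReal := by
    intro i
    have hDi : D i = insert i (Finset.univ.filter (fun j => sim i j)) := by
      rw [hD]
      ext j
      simp only [Finset.mem_filter, Finset.mem_univ, true_and, Finset.mem_insert]
    have hni : i ∉ Finset.univ.filter (fun j => sim i j) := by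
      simp only [Finset.mem_filter, Finset.mem_univ, true_and]
      rw [hsim]
      simp
    rw [hDi, Finset.sum_insert hni, Set.inter_self]
  have hΔ2 : Δbar = ∑ i : Fin k, c i * ∑ j ∈ D i, c j * (P (A i ∩ A j)).toReal := by
    rw [hΔbar]
    rw [← Finset.sum_add_distrib]
    refine Finset.sum_congr rfl fun i _ => ?_
    rw [hDsum i, mul_add, Finset.mul_sum]
    congr 1
    · ring
    · exact Finset.sum_congr rfl fun j _ => by ring
  have h1 : ∀ i : Fin k, c i * (((P (A i)).toReal
        - s * ∑ j ∈ D i, c j * (P (A i ∩ A j)).toReal) * jF P A c s)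
      = (c i * (P (A i)).toReal) * jF P A c s
        - s * ((c i * ∑ j ∈ D i, c j * (P (A i ∩ A j)).toReal) * jF P A c s) := fun i => by ring
  rw [hΔ2, Finset.sum_congr rfl (fun i _ => h1 i), Finset.sum_sub_distrib,
    ← Finset.sum_mul, ← Finset.mul_sum, ← Finset.sum_mul]
  ring

end
section
variable {Ω : Type*} [MeasurableSpace Ω] (P : Measure Ω) [IsProbabilityMeasure P]
variable (I : Set (Set Ω)) {k : ℕ} (A : Fin k → Set Ω) (c : Fin k → ℝ)

lemma jF_pos (hAmeas : ∀ i, MeasurableSet (A i)) (hc : ∀ i, 0 < c i)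
    {u : ℝ} (hu : 0 ≤ u) : 0 < jF P A c u := by
  have hXle : ∀ ω, ∑ i : Fin k, c i * jind (A i) ω ≤ ∑ i : Fin k, c i :=
    fun ω => Finset.sum_le_sum fun i _ => by
      nlinarith [jind_le_one (B := A i) ω, jind_nonneg (B := A i) ω, (hc i).le]
  have hpt : ∀ ω, Real.exp (-(u * ∑ i : Fin k, c i)) ≤
      Real.exp (-(u * ∑ i : Fin k, c i * jind (A i) ω)) := by
    intro ω
    apply Real.exp_le_exp.2
    nlinarith [hXle ω, hu]
  have hmono := integral_mono (integrable_const (Real.exp (-(u * ∑ i : Fin k, c i))))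
    (integrable_expX P A c hAmeas u) hpt
  rw [integral_const] at hmono
  simp only [measure_univ, probReal_univ, ENNReal.toReal_one, one_smul] at hmono
  rw [jF_eq_integral P A c hAmeas u]
  exact lt_of_lt_of_le (Real.exp_pos _) hmono

lemma jF_zero (hAmeas : ∀ i, MeasurableSet (A i)) : jF P A c 0 = 1 := by
  rw [jF_eq_integral P A c hAmeas 0]
  simp

lemma jF_bound
    (hcorr : ∀ A ∈ I, ∀ B ∈ I, P (A ∩ B) ≥ P A * P B)
    (hinter : ∀ A ∈ I, ∀ B ∈ I, A ∩ B ∈ I)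
    (hunion : ∀ A ∈ I, ∀ B ∈ I, A ∪ B ∈ I)
    (hA : ∀ i, A i ∈ I) (hAmeas : ∀ i, MeasurableSet (A i))
    (hc : ∀ i, 0 < c i)
    (sim : Fin k → Fin k → Prop)
    (hsim : ∀ i j, sim i j ↔ i ≠ j ∧ P (A i ∩ A j) ≠ P (A i) * P (A j))
    (Δbar : ℝ)
    (hΔbar : Δbar = ∑ i : Fin k, (c i) ^ 2 * (P (A i)).toReal
        + ∑ i : Fin k, ∑ j ∈ Finset.univ.filter (fun j => sim i j),
            c i * c j * (P (A i ∩ A j)).toReal)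
    (s : ℝ) (hs : 0 ≤ s) :
    jF P A c s ≤ Real.exp (-(s * ∑ i : Fin k, c i * (P (A i)).toReal) + s ^ 2 * Δbar / 2) := by
  classical
  set μr : ℝ := ∑ i : Fin k, c i * (P (A i)).toReal with hμr
  set G : ℝ → ℝ := fun u => Real.log (jF P A c u) + u * μr - u ^ 2 * Δbar / 2 with hGdef
  set jF' : ℝ → ℝ := fun u =>
    -∑ S : Finset (Fin k), (P (jcell A S)).toReal * (jx c S * Real.exp (-(u * jx c S))) with hjF'
  have hGderiv : ∀ u : ℝ, 0 ≤ u →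
      HasDerivAt G (jF' u / jF P A c u + μr - u * Δbar) u := by
    intro u hu
    have h1 : HasDerivAt (fun v => Real.log (jF P A c v)) (jF' u / jF P A c u) u :=
      (hasDerivAt_jF P A c u).log (jF_pos P A c hAmeas hc hu).ne'
    have h2 : HasDerivAt (fun v : ℝ => v * μr) μr u := by
      simpa using (hasDerivAt_id u).mul_const μr
    have h3 : HasDerivAt (fun v : ℝ => v ^ 2 * Δbar / 2) (u * Δbar) u := by
      have := ((hasDerivAt_pow 2 u).mul_const Δbar).div_const 2
      refine this.congr_deriv ?_
      ring
    have := (h1.add h2).sub h3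
    exact this
  have hderiv_nonpos : ∀ u : ℝ, 0 ≤ u → jF' u / jF P A c u + μr - u * Δbar ≤ 0 := by
    intro u hu
    have hpos := jF_pos P A c hAmeas hc hu
    have hkey := key_ineq P I A c hcorr hinter hunion hA hAmeas hc sim hsim Δbar hΔbar u hu
    have hXexp := integral_X_expX P A c hAmeas u
    have hjle : jF' u ≤ (-(μr - u * Δbar)) * jF P A c u := by
      rw [hjF']
      simp only
      rw [← hXexp]
      have : (μr - u * Δbar) * jF P A c u
          ≤ ∫ ω, (∑ i : Fin k, c i * jind (A i) ω)
              * Real.exp (-(u * ∑ i : Fin k, c i * jind (A i) ω)) ∂P := hkey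
      linarith
    have hdiv : jF' u / jF P A c u ≤ -(μr - u * Δbar) :=
      (div_le_iff₀ hpos).2 hjle
    linarith
  have hanti : AntitoneOn G (Set.Ici (0 : ℝ)) := by
    apply antitoneOn_of_deriv_nonpos (convex_Ici 0)
    · intro u hu
      exact (hGderiv u hu).continuousAt.continuousWithinAt
    · intro u hu
      rw [interior_Ici] at hu
      exact (hGderiv u (le_of_lt hu)).differentiableAt.differentiableWithinAt
    · intro u hu
      rw [interior_Ici] at hu
      rw [(hGderiv u (le_of_lt hu)).deriv]
      exact hderiv_nonpos u (le_of_lt hu)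
  have hG0 : G 0 = 0 := by
    rw [hGdef]
    simp [jF_zero P A c hAmeas]
  have hGs : G s ≤ 0 := by
    rw [← hG0]
    exact hanti (Set.self_mem_Ici) hs hs
  have hlog : Real.log (jF P A c s) ≤ -(s * μr) + s ^ 2 * Δbar / 2 := by
    rw [hGdef] at hGs
    simp only at hGs
    linarith
  exact (Real.log_le_iff_le_exp (jF_pos P A c hAmeas hc hs)).1 hlog

end
/-- The weighted lower-tail Janson inequality
`Pr(X ≤ μ − t) ≤ exp(−t²/(2Δ̄))` for `X = ∑ c_i 1_{A_i}` with positive weights. -/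
theorem weighted_janson_lower_tail_general_upsets
    {Ω : Type*} [MeasurableSpace Ω] (P : Measure Ω) [IsProbabilityMeasure P]
    (I : Set (Set Ω))
    (hcorr : ∀ A ∈ I, ∀ B ∈ I, P (A ∩ B) ≥ P A * P B)
    (hinter : ∀ A ∈ I, ∀ B ∈ I, A ∩ B ∈ I)
    (hunion : ∀ A ∈ I, ∀ B ∈ I, A ∪ B ∈ I)
    (k : ℕ) (A : Fin k → Set Ω) (hA : ∀ i, A i ∈ I)
    (hAmeas : ∀ i, MeasurableSet (A i))
    (c : Fin k → ℝ) (hc : ∀ i, 0 < c i)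
    (sim : Fin k → Fin k → Prop)
    (hsim : ∀ i j, sim i j ↔ i ≠ j ∧ P (A i ∩ A j) ≠ P (A i) * P (A j))
    (X : Ω → ℝ)
    (hX : ∀ ω, X ω = ∑ i : Fin k, c i * (if ω ∈ A i then (1 : ℝ) else 0))
    (μ Δbar : ℝ)
    (hμ : μ = ∫ ω, X ω ∂P)
    (hΔbar : Δbar = ∑ i : Fin k, (c i) ^ 2 * (P (A i)).toReal
        + ∑ i : Fin k, ∑ j ∈ Finset.univ.filter (fun j => sim i j),
            c i * c j * (P (A i ∩ A j)).toReal) :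
    ∀ t : ℝ, 0 ≤ t → t ≤ μ →
      (P {ω | X ω ≤ μ - t}).toReal ≤ Real.exp (-(t ^ 2) / (2 * Δbar)) := by
  classical
  intro t ht htμ
  have hX' : ∀ ω, X ω = ∑ i : Fin k, c i * jind (A i) ω := by
    intro ω; rw [hX]
    exact Finset.sum_congr rfl fun i _ => by simp [jind]
  have hprob_le : (P {ω | X ω ≤ μ - t}).toReal ≤ 1 := by
    have h := prob_le_one (μ := P) (s := {ω | X ω ≤ μ - t})
    have := ENNReal.toReal_mono (by simp) h
    simpa using this
  have hμ' : μ = ∑ i : Fin k, c i * (P (A i)).toReal := by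
    rw [hμ]
    have h : X = fun ω => ∑ i : Fin k, c i * jind (A i) ω := funext hX'
    rw [h, integral_finset_sum _ (fun i _ => (integrable_jind P (hAmeas i)).const_mul (c i))]
    simp only [integral_const_mul]
    exact Finset.sum_congr rfl fun i _ => by rw [integral_jind P (hAmeas i)]
  have hsum2nn : 0 ≤ ∑ i : Fin k, ∑ j ∈ Finset.univ.filter (fun j => sim i j),
      c i * c j * (P (A i ∩ A j)).toReal :=
    Finset.sum_nonneg fun i _ => Finset.sum_nonneg fun j _ =>
      mul_nonneg (mul_nonneg (hc i).le (hc j).le) ENNReal.toReal_nonneg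
  have hsum1nn : ∀ i ∈ (Finset.univ : Finset (Fin k)),
      0 ≤ (c i) ^ 2 * (P (A i)).toReal :=
    fun i _ => mul_nonneg (sq_nonneg _) ENNReal.toReal_nonneg
  have hΔnn : 0 ≤ Δbar := by
    rw [hΔbar]
    exact add_nonneg (Finset.sum_nonneg hsum1nn) hsum2nn
  by_cases ht0 : t = 0
  · subst ht0
    have : -(((0:ℝ)) ^ 2) / (2 * Δbar) = 0 := by norm_num
    rw [this, Real.exp_zero]
    simpa using hprob_le
  have htpos : 0 < t := lt_of_le_of_ne ht (Ne.symm ht0)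
  have hμpos : 0 < μ := lt_of_lt_of_le htpos htμ
  have hΔpos : 0 < Δbar := by
    rcases lt_or_eq_of_le hΔnn with h | h
    · exact h
    have h1 : ∑ i : Fin k, (c i) ^ 2 * (P (A i)).toReal = 0 := by
      have := Finset.sum_nonneg hsum1nn
      rw [hΔbar] at h
      linarith
    have hzero : ∀ i ∈ (Finset.univ : Finset (Fin k)),
        (c i) ^ 2 * (P (A i)).toReal = 0 :=
      (Finset.sum_eq_zero_iff_of_nonneg hsum1nn).1 h1
    have hμ0 : μ = 0 := by
      rw [hμ']
      apply Finset.sum_eq_zero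
      intro i hi
      have := hzero i hi
      have hc2 : (c i) ^ 2 ≠ 0 := pow_ne_zero 2 (hc i).ne'
      have : (P (A i)).toReal = 0 := by
        rcases mul_eq_zero.1 this with h' | h'
        · exact absurd h' hc2
        · exact h'
      rw [this, mul_zero]
    linarith
  set s : ℝ := t / Δbar with hsdef
  have hs : 0 ≤ s := div_nonneg ht hΔnn
  have hXmeas : Measurable X := by
    have h : X = fun ω => ∑ i : Fin k, c i * jind (A i) ω := funext hX'
    rw [h]
    apply Finset.measurable_sum
    intro i _
    have : Measurable (jind (A i)) := by
      rw [jind_eq_indicator]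
      exact measurable_const.indicator (hAmeas i)
    exact this.const_mul (c i)
  have hset : MeasurableSet {ω | X ω ≤ μ - t} := by
    have h : {ω | X ω ≤ μ - t} = X ⁻¹' (Set.Iic (μ - t)) := rfl
    rw [h]
    exact hXmeas measurableSet_Iic
  have hpt : ∀ ω, jind {ω | X ω ≤ μ - t} ω
      ≤ Real.exp (s * (μ - t)) * Real.exp (-(s * ∑ i : Fin k, c i * jind (A i) ω)) := by
    intro ω
    rw [← Real.exp_add]
    by_cases hω : X ω ≤ μ - t
    · have h1 : jind {ω | X ω ≤ μ - t} ω = 1 := by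
        simp [jind, Set.mem_setOf_eq, hω]
      rw [h1]
      have hXω : ∑ i : Fin k, c i * jind (A i) ω ≤ μ - t := by
        rw [← hX' ω]; exact hω
      have harg : 0 ≤ s * (μ - t) + -(s * ∑ i : Fin k, c i * jind (A i) ω) := by
        nlinarith [hXω, hs]
      calc (1:ℝ) = Real.exp 0 := Real.exp_zero.symm
        _ ≤ _ := Real.exp_le_exp.2 harg
    · have h1 : jind {ω | X ω ≤ μ - t} ω = 0 := by
        simp [jind, Set.mem_setOf_eq, hω]
      rw [h1]
      exact (Real.exp_pos _).le
  have hmono := integral_mono (integrable_jind P hset)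
    ((integrable_expX P A c hAmeas s).const_mul (Real.exp (s * (μ - t)))) hpt
  rw [integral_jind P hset, integral_const_mul] at hmono
  have hFb := jF_bound P I A c hcorr hinter hunion hA hAmeas hc sim hsim Δbar hΔbar s hs
  have hμsum : ∑ i : Fin k, c i * (P (A i)).toReal = μ := hμ'.symm
  calc (P {ω | X ω ≤ μ - t}).toReal
      ≤ Real.exp (s * (μ - t)) * jF P A c s := by
        rw [jF_eq_integral P A c hAmeas s]; exact hmono
    _ ≤ Real.exp (s * (μ - t))
        * Real.exp (-(s * ∑ i : Fin k, c i * (P (A i)).toReal) + s ^ 2 * Δbar / 2) :=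
        mul_le_mul_of_nonneg_left hFb (Real.exp_pos _).le
    _ = Real.exp (s * (μ - t) + (-(s * μ) + s ^ 2 * Δbar / 2)) := by
        rw [← Real.exp_add, hμsum]
    _ = Real.exp (-(t ^ 2) / (2 * Δbar)) := by
        congr 1
        rw [hsdef]
        field_simp
        ring
end

section
/- Let A_1, ..., A_k be increasing events in a finite product probability space {0,1}^S and i ~ j iff i ≠ j and A_i, A_j are dependent. Fix i and s ≥ 0, and set J = Σ_{j≠i, j≁i} 1_{A_j}. Then the event A_i is independent of the random variable J; in particular E[1_{A_i} e^{−sJ}] = Pr(A_i) E[e^{−sJ}]. -/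
open MeasureTheory Finset Real
open scoped Classical

section Aux

variable {S : Type*} [Fintype S] (μs : S → Measure Bool) [∀ s, IsProbabilityMeasure (μs s)]

local notation "P" => Measure.pi μs

lemma aux_meas_all (X : Set (S → Bool)) : MeasurableSet X :=
  X.toFinite.measurableSet

lemma aux_w_eq (ω : S → Bool) :
    P {ω} = ∏ s, μs s {ω s} := by
  rw [← Set.univ_pi_singleton, Measure.pi_pi]

lemma aux_measure_eq_sum (X : Set (S → Bool)) :
    P X = ∑ ω ∈ Finset.univ.filter (· ∈ X), P {ω} := by
  have hX : X = ⋃ ω ∈ Finset.univ.filter (· ∈ X), ({ω} : Set (S → Bool)) := by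
    ext ω; simp
  conv_lhs => rw [hX]
  rw [measure_biUnion_finset]
  · intro a _ b _ hab
    simp [Set.disjoint_singleton, hab]
  · intro b _; exact (Set.toFinite _).measurableSet

lemma aux_toReal_eq_sum (X : Set (S → Bool)) :
    (P X).toReal = ∑ ω ∈ Finset.univ.filter (· ∈ X), (P {ω}).toReal := by
  rw [aux_measure_eq_sum μs X, ENNReal.toReal_sum]
  intro a _; exact measure_ne_top _ _

/-- Harris inequality on the product space. -/
lemma aux_harris (A B : Set (S → Bool))
    (hA : ∀ ω ω' : S → Bool, (∀ s, ω s ≤ ω' s) → ω ∈ A → ω' ∈ A)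
    (hB : ∀ ω ω' : S → Bool, (∀ s, ω s ≤ ω' s) → ω ∈ B → ω' ∈ B) :
    (P A).toReal * (P B).toReal ≤ (P (A ∩ B)).toReal := by
  set w : (S → Bool) → ℝ := fun ω => (P {ω}).toReal with hw
  set f : (S → Bool) → ℝ := fun ω => if ω ∈ A then 1 else 0 with hf
  set g : (S → Bool) → ℝ := fun ω => if ω ∈ B then 1 else 0 with hg
  have hw0 : 0 ≤ w := fun ω => ENNReal.toReal_nonneg
  have hf0 : 0 ≤ f := fun ω => by by_cases h : ω ∈ A <;> simp [hf, h]
  have hg0 : 0 ≤ g := fun ω => by by_cases h : ω ∈ B <;> simp [hg, h]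
  have hfm : Monotone f := by
    intro a b hab
    by_cases ha : a ∈ A
    · have hb : b ∈ A := hA a b (fun s => hab s) ha
      simp [hf, ha, hb]
    · by_cases hb : b ∈ A <;> simp [hf, ha, hb]
  have hgm : Monotone g := by
    intro a b hab
    by_cases ha : a ∈ B
    · have hb : b ∈ B := hB a b (fun s => hab s) ha
      simp [hg, ha, hb]
    · by_cases hb : b ∈ B <;> simp [hg, ha, hb]
  have hwprod : ∀ ω : S → Bool, w ω = ∏ s, (μs s {ω s}).toReal := by
    intro ω
    rw [hw]; simp only [aux_w_eq μs ω, ENNReal.toReal_prod]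
  have hlog : ∀ a b : S → Bool, w a * w b ≤ w (a ⊓ b) * w (a ⊔ b) := by
    intro a b
    rw [hwprod, hwprod, hwprod, hwprod, ← Finset.prod_mul_distrib, ← Finset.prod_mul_distrib]
    apply le_of_eq
    apply Finset.prod_congr rfl
    intro s _
    have h2 : (a ⊓ b) s = a s ⊓ b s := rfl
    have h3 : (a ⊔ b) s = a s ⊔ b s := rfl
    rw [h2, h3]
    cases ha : a s <;> cases hb : b s <;> simp [mul_comm]
  have key := fkg f g w hw0 hf0 hg0 hfm hgm hlog
  have hsum : ∀ X : Set (S → Bool), ∑ a, w a * (if a ∈ X then (1:ℝ) else 0) = (P X).toReal := by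
    intro X
    rw [aux_toReal_eq_sum μs X]
    simp_rw [mul_ite, mul_one, mul_zero]
    rw [← Finset.sum_filter]
  have h1 : ∑ a, w a * f a = (P A).toReal := hsum A
  have h2 : ∑ a, w a * g a = (P B).toReal := hsum B
  have h3 : ∑ a, w a * (f a * g a) = (P (A ∩ B)).toReal := by
    rw [← hsum (A ∩ B)]
    apply Finset.sum_congr rfl
    intro a _
    by_cases ha : a ∈ A <;> by_cases hb : a ∈ B <;> simp [hf, hg, ha, hb]
  have h4 : ∑ a, w a = 1 := by
    have := hsum Set.univ
    simp at this
    simpa using this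
  rw [h1, h2, h3, h4] at key
  linarith [key]

lemma aux_indep_inter (Ai B C : Set (S → Bool))
    (hAi : ∀ ω ω' : S → Bool, (∀ s, ω s ≤ ω' s) → ω ∈ Ai → ω' ∈ Ai)
    (hB : ∀ ω ω' : S → Bool, (∀ s, ω s ≤ ω' s) → ω ∈ B → ω' ∈ B)
    (hC : ∀ ω ω' : S → Bool, (∀ s, ω s ≤ ω' s) → ω ∈ C → ω' ∈ C)
    (h1 : (P (Ai ∩ B)).toReal = (P Ai).toReal * (P B).toReal)
    (h2 : (P (Ai ∩ C)).toReal = (P Ai).toReal * (P C).toReal) :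
    (P (Ai ∩ (B ∩ C))).toReal = (P Ai).toReal * (P (B ∩ C)).toReal := by
  have hBC : ∀ ω ω' : S → Bool, (∀ s, ω s ≤ ω' s) → ω ∈ B ∩ C → ω' ∈ B ∩ C :=
    fun ω ω' h hm => ⟨hB ω ω' h hm.1, hC ω ω' h hm.2⟩
  have hBuC : ∀ ω ω' : S → Bool, (∀ s, ω s ≤ ω' s) → ω ∈ B ∪ C → ω' ∈ B ∪ C := by
    intro ω ω' h hm
    rcases hm with hm | hm
    · exact Or.inl (hB ω ω' h hm)
    · exact Or.inr (hC ω ω' h hm)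
  have hh1 := aux_harris μs Ai (B ∩ C) hAi hBC
  have hh2 := aux_harris μs Ai (B ∪ C) hAi hBuC
  have e1 : (P (B ∪ C)).toReal + (P (B ∩ C)).toReal = (P B).toReal + (P C).toReal := by
    have := congrArg ENNReal.toReal (measure_union_add_inter (μ := P) B (aux_meas_all C))
    rwa [ENNReal.toReal_add (measure_ne_top _ _) (measure_ne_top _ _),
      ENNReal.toReal_add (measure_ne_top _ _) (measure_ne_top _ _)] at this
  have e2 : (P (Ai ∩ (B ∪ C))).toReal + (P (Ai ∩ (B ∩ C))).toReal
      = (P (Ai ∩ B)).toReal + (P (Ai ∩ C)).toReal := by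
    have h' := congrArg ENNReal.toReal
      (measure_union_add_inter (μ := P) (Ai ∩ B) (aux_meas_all (Ai ∩ C)))
    rw [ENNReal.toReal_add (measure_ne_top _ _) (measure_ne_top _ _),
      ENNReal.toReal_add (measure_ne_top _ _) (measure_ne_top _ _)] at h'
    rw [show Ai ∩ B ∪ Ai ∩ C = Ai ∩ (B ∪ C) from (Set.inter_union_distrib_left Ai B C).symm,
      show Ai ∩ B ∩ (Ai ∩ C) = Ai ∩ (B ∩ C) from (Set.inter_inter_distrib_left Ai B C).symm] at h'
    exact h'
  have e1' : (P Ai).toReal * (P (B ∪ C)).toReal + (P Ai).toReal * (P (B ∩ C)).toReal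
      = (P Ai).toReal * (P B).toReal + (P Ai).toReal * (P C).toReal := by
    rw [← mul_add, e1, mul_add]
  linarith

lemma aux_indep_iInter {k : ℕ} (A : Fin k → Set (S → Bool))
    (hAinc : ∀ i, ∀ ω ω' : S → Bool, (∀ s, ω s ≤ ω' s) → ω ∈ A i → ω' ∈ A i)
    (i : Fin k) (T : Finset (Fin k))
    (hT : ∀ j ∈ T, (P (A i ∩ A j)).toReal = (P (A i)).toReal * (P (A j)).toReal) :
    (P (A i ∩ ⋂ j ∈ T, A j)).toReal = (P (A i)).toReal * (P (⋂ j ∈ T, A j)).toReal := by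
  classical
  induction T using Finset.induction_on with
  | empty => simp
  | @insert j T hj ih =>
      rw [Finset.set_biInter_insert]
      have hCinc : ∀ ω ω' : S → Bool, (∀ s, ω s ≤ ω' s) →
          ω ∈ (⋂ j' ∈ T, A j') → ω' ∈ (⋂ j' ∈ T, A j') := by
        intro ω ω' h hm
        simp only [Set.mem_iInter] at hm ⊢
        exact fun j' hj' => hAinc j' ω ω' h (hm j' hj')
      exact aux_indep_inter μs (A i) (A j) (⋂ j' ∈ T, A j') (hAinc i) (hAinc j) hCinc
        (hT j (Finset.mem_insert_self j T))
        (ih (fun j' hj' => hT j' (Finset.mem_insert_of_mem hj')))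


end Aux

/-- For increasing events in a finite product space, `A_i` is independent of the random
variable `J = ∑_{j≠i, j≁i} 1_{A_j}`; in particular `E[1_{A_i} e^{−sJ}] = Pr(A_i) E[e^{−sJ}]`. -/
theorem indep_of_count_of_independent_events
    {S : Type*} [Fintype S] (μs : S → Measure Bool) [∀ s, IsProbabilityMeasure (μs s)]
    (k : ℕ) (A : Fin k → Set (S → Bool))
    (hAinc : ∀ i, ∀ ω ω' : S → Bool, (∀ s, ω s ≤ ω' s) → ω ∈ A i → ω' ∈ A i)
    (hAmeas : ∀ i, MeasurableSet (A i))
    (sim : Fin k → Fin k → Prop)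
    (hsim : ∀ i j, sim i j ↔ i ≠ j ∧
      Measure.pi μs (A i ∩ A j) ≠ Measure.pi μs (A i) * Measure.pi μs (A j))
    (i : Fin k) (s : ℝ) (hs : 0 ≤ s)
    (J : (S → Bool) → ℝ)
    (hJ : ∀ ω, J ω = ∑ j ∈ Finset.univ.filter (fun j => j ≠ i ∧ ¬ sim i j),
        (if ω ∈ A j then (1 : ℝ) else 0)) :
    (∀ B : Set ℝ, MeasurableSet B →
      Measure.pi μs (A i ∩ J ⁻¹' B) = Measure.pi μs (A i) * Measure.pi μs (J ⁻¹' B)) ∧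
    (∫ ω, (if ω ∈ A i then (1 : ℝ) else 0) * Real.exp (-s * J ω) ∂Measure.pi μs)
      = (Measure.pi μs (A i)).toReal * ∫ ω, Real.exp (-s * J ω) ∂Measure.pi μs := by
  classical
  have hmeas_all : ∀ X : Set (S → Bool), MeasurableSet X := fun X => aux_meas_all X
  set F : Finset (Fin k) := Finset.univ.filter (fun j => j ≠ i ∧ ¬ sim i j) with hF
  have hpairR : ∀ j ∈ F, (Measure.pi μs (A i ∩ A j)).toReal
      = (Measure.pi μs (A i)).toReal * (Measure.pi μs (A j)).toReal := by
    intro j hj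
    rw [hF, Finset.mem_filter] at hj
    have heq : Measure.pi μs (A i ∩ A j) = Measure.pi μs (A i) * Measure.pi μs (A j) := by
      by_contra hne
      exact hj.2.2 ((hsim i j).mpr ⟨Ne.symm hj.2.1, hne⟩)
    rw [heq, ENNReal.toReal_mul]
  set p1 : Set (Set (S → Bool)) := {A i} with hp1def
  set p2 : Set (Set (S → Bool)) :=
    {t | ∃ T : Finset (Fin k), T ⊆ F ∧ t = ⋂ j ∈ T, A j} with hp2def
  have hp2pi : IsPiSystem p2 := by
    rintro t1 ⟨T1, hT1, rfl⟩ t2 ⟨T2, hT2, rfl⟩ -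
    refine ⟨T1 ∪ T2, Finset.union_subset hT1 hT2, ?_⟩
    ext x
    simp [Finset.mem_union, or_imp, forall_and]
  have hIndepSets : ProbabilityTheory.IndepSets p1 p2 (Measure.pi μs) := by
    rw [ProbabilityTheory.IndepSets_iff]
    rintro t1 t2 ht1 ⟨T, hT, rfl⟩
    rw [hp1def, Set.mem_singleton_iff] at ht1
    subst ht1
    have hR := aux_indep_iInter μs A hAinc i T (fun j hj => hpairR j (hT hj))
    rw [← ENNReal.toReal_eq_toReal_iff' (measure_ne_top _ _)
      (ENNReal.mul_ne_top (measure_ne_top _ _) (measure_ne_top _ _)), ENNReal.toReal_mul]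
    exact hR
  have hIndep : ProbabilityTheory.Indep (MeasurableSpace.generateFrom p1)
      (MeasurableSpace.generateFrom p2) (Measure.pi μs) :=
    ProbabilityTheory.IndepSets.indep' (fun t _ => hmeas_all t) (fun t _ => hmeas_all t)
      (IsPiSystem.singleton (A i)) hp2pi hIndepSets
  have hAi_m1 : MeasurableSet[MeasurableSpace.generateFrom p1] (A i) :=
    MeasurableSpace.measurableSet_generateFrom rfl
  have hAj_m2 : ∀ j ∈ F, MeasurableSet[MeasurableSpace.generateFrom p2] (A j) := by
    intro j hj
    refine MeasurableSpace.measurableSet_generateFrom ⟨{j}, ?_, ?_⟩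
    · simpa using hj
    · rw [Finset.set_biInter_singleton]
  have hJmeas : Measurable[MeasurableSpace.generateFrom p2] J := by
    have hJ' : J = fun ω => ∑ j ∈ F, (if ω ∈ A j then (1 : ℝ) else 0) := funext hJ
    rw [hJ']
    apply Finset.measurable_sum
    intro j hj
    exact Measurable.ite (hAj_m2 j hj) measurable_const measurable_const
  have goal1 : ∀ B : Set ℝ, MeasurableSet B →
      Measure.pi μs (A i ∩ J ⁻¹' B)
        = Measure.pi μs (A i) * Measure.pi μs (J ⁻¹' B) := by
    intro B hB
    exact (ProbabilityTheory.Indep_iff _ _ _).mp hIndep (A i) (J ⁻¹' B) hAi_m1 (hJmeas hB)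
  refine ⟨goal1, ?_⟩
  have hfmeas : Measurable[MeasurableSpace.generateFrom p1]
      (fun ω => if ω ∈ A i then (1 : ℝ) else 0) :=
    Measurable.ite hAi_m1 measurable_const measurable_const
  have hgmeas : Measurable[MeasurableSpace.generateFrom p2]
      (fun ω => Real.exp (-s * J ω)) :=
    (hJmeas.const_mul (-s)).exp
  have hIndepFun : ProbabilityTheory.IndepFun
      (fun ω => if ω ∈ A i then (1 : ℝ) else 0) (fun ω => Real.exp (-s * J ω))
      (Measure.pi μs) := by
    rw [ProbabilityTheory.IndepFun_iff_Indep]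
    exact ProbabilityTheory.indep_of_indep_of_le_left
      (ProbabilityTheory.indep_of_indep_of_le_right hIndep hgmeas.comap_le) hfmeas.comap_le
  have hint := ProbabilityTheory.IndepFun.integral_mul_eq_mul_integral hIndepFun Integrable.of_finite.aestronglyMeasurable Integrable.of_finite.aestronglyMeasurable
  have hint' : ∫ ω, (if ω ∈ A i then (1 : ℝ) else 0) * Real.exp (-s * J ω) ∂Measure.pi μs
      = (∫ ω, (if ω ∈ A i then (1 : ℝ) else 0) ∂Measure.pi μs)
        * ∫ ω, Real.exp (-s * J ω) ∂Measure.pi μs := hint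
  rw [hint']
  congr 1
  have hind : (fun ω => if ω ∈ A i then (1 : ℝ) else 0) = (A i).indicator (fun _ => (1 : ℝ)) := by
    funext ω
    simp [Set.indicator_apply]
  rw [hind]
  exact integral_indicator_one (hAmeas i)
end

section
/- Let I be the collection of all increasing events in a finite product probability space {0,1}^S with product measure. Then I satisfies: (i) Pr(A ∩ B) ≥ Pr(A)Pr(B) for all A, B ∈ I, and (ii) A ∩ B ∈ I and A ∪ B ∈ I for all A, B ∈ I. -/
open MeasureTheory

section aux

variable {S : Type*} [Fintype S] [DecidableEq S] (μs : S → Measure Bool)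
  [∀ s, IsProbabilityMeasure (μs s)]

private noncomputable def wNN : (S → Bool) → NNReal :=
  fun ω => ∏ s, (μs s {ω s}).toNNReal

private lemma measure_eq_sum (A : Set (S → Bool)) :
    Measure.pi μs A = ∑ ω : S → Bool, Set.indicator A (fun _ => (1 : ENNReal)) ω *
      (wNN μs ω : ENNReal) := by
  classical
  have hsingle : ∀ ω : S → Bool, Measure.pi μs {ω} = (wNN μs ω : ENNReal) := by
    intro ω
    rw [← Set.univ_pi_singleton ω, Measure.pi_pi]
    rw [wNN, ENNReal.coe_finset_prod]
    refine Finset.prod_congr rfl fun s _ => ?_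
    rw [ENNReal.coe_toNNReal (measure_ne_top _ _)]
  have hA : A = ⋃ ω ∈ A.toFinset, ({ω} : Set (S → Bool)) := by
    ext x; simp
  have h1 : Measure.pi μs A = ∑ ω ∈ A.toFinset, (wNN μs ω : ENNReal) := by
    conv_lhs => rw [hA]
    rw [measure_biUnion_finset]
    · exact Finset.sum_congr rfl fun ω _ => hsingle ω
    · intro x _ y _ hxy
      simp [Set.disjoint_singleton, hxy]
    · intro ω _
      exact MeasurableSet.singleton ω
  rw [h1]
  rw [← Finset.sum_subset (Finset.subset_univ A.toFinset)
    (fun ω _ hω => by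
      rw [Set.indicator_of_notMem (fun h => hω (Set.mem_toFinset.mpr h)), zero_mul])]
  refine Finset.sum_congr rfl fun ω hω => ?_
  rw [Set.indicator_of_mem (Set.mem_toFinset.mp hω), one_mul]

omit [DecidableEq S] [∀ s, IsProbabilityMeasure (μs s)] in
private lemma wNN_le : ∀ a b : S → Bool,
    wNN μs a * wNN μs b ≤ wNN μs (a ⊓ b) * wNN μs (a ⊔ b) := by
  intro a b
  rw [wNN, wNN, wNN, wNN, ← Finset.prod_mul_distrib, ← Finset.prod_mul_distrib]
  refine le_of_eq (Finset.prod_congr rfl fun s _ => ?_)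
  cases ha : a s <;> cases hb : b s <;>
    simp [Pi.inf_apply, Pi.sup_apply, ha, hb, mul_comm]

end aux

/-- The collection of increasing events in a finite product probability space `{0,1}^S`
satisfies positive correlation (Harris's Lemma) and is closed under intersections and
unions. -/
theorem increasing_events_posCorr_and_closed
    {S : Type*} [Fintype S] (μs : S → Measure Bool) [∀ s, IsProbabilityMeasure (μs s)]
    (I : Set (Set (S → Bool)))
    (hI : I = {A | ∀ ω ω' : S → Bool, (∀ s, ω s ≤ ω' s) → ω ∈ A → ω' ∈ A}) :
    (∀ A ∈ I, ∀ B ∈ I, Measure.pi μs (A ∩ B) ≥ Measure.pi μs A * Measure.pi μs B) ∧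
    (∀ A ∈ I, ∀ B ∈ I, A ∩ B ∈ I ∧ A ∪ B ∈ I) := by
  subst hI
  constructor
  · intro A hA B hB
    classical
    -- indicator functions valued in NNReal
    set f : (S → Bool) → NNReal := Set.indicator A (fun _ => 1) with hf
    set g : (S → Bool) → NNReal := Set.indicator B (fun _ => 1) with hg
    have hfmono : Monotone f := by
      intro a b hab
      by_cases ha : a ∈ A
      · have hb : b ∈ A := hA a b (fun s => hab s) ha
        simp [hf, ha, hb]
      · simp [hf, ha]
    have hgmono : Monotone g := by
      intro a b hab
      by_cases hb : a ∈ B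
      · have : b ∈ B := hB a b (fun s => hab s) hb
        simp [hg, hb, this]
      · simp [hg, hb]
    have key := fkg (μ := wNN μs) (f := f) (g := g)
      (fun _ => zero_le) (fun _ => zero_le) (fun _ => zero_le)
      hfmono hgmono (wNN_le μs)
    -- rewrite measures as sums
    have hmA : Measure.pi μs A = ((∑ ω : S → Bool, wNN μs ω * f ω : NNReal) : ENNReal) := by
      rw [measure_eq_sum, ENNReal.coe_finset_sum]
      refine Finset.sum_congr rfl fun ω _ => ?_
      by_cases h : ω ∈ A <;> simp [hf, h, mul_comm]
    have hmB : Measure.pi μs B = ((∑ ω : S → Bool, wNN μs ω * g ω : NNReal) : ENNReal) := by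
      rw [measure_eq_sum, ENNReal.coe_finset_sum]
      refine Finset.sum_congr rfl fun ω _ => ?_
      by_cases h : ω ∈ B <;> simp [hg, h, mul_comm]
    have hmAB : Measure.pi μs (A ∩ B) =
        ((∑ ω : S → Bool, wNN μs ω * (f ω * g ω) : NNReal) : ENNReal) := by
      rw [measure_eq_sum, ENNReal.coe_finset_sum]
      refine Finset.sum_congr rfl fun ω _ => ?_
      by_cases h1 : ω ∈ A <;> by_cases h2 : ω ∈ B <;>
        simp [hf, hg, h1, h2, Set.indicator_of_mem, Set.indicator_of_notMem, mul_comm]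
    have htot : (∑ ω : S → Bool, wNN μs ω) = 1 := by
      have := measure_eq_sum μs (Set.univ : Set (S → Bool))
      rw [measure_univ] at this
      have h2 : (1 : ENNReal) = ∑ ω : S → Bool, (wNN μs ω : ENNReal) := by
        simpa using this
      have h3 : ((∑ ω : S → Bool, wNN μs ω : NNReal) : ENNReal) = 1 := by
        rw [ENNReal.coe_finset_sum]; exact h2.symm
      exact_mod_cast h3
    rw [ge_iff_le, hmA, hmB, hmAB, ← ENNReal.coe_mul, ENNReal.coe_le_coe]
    calc (∑ ω, wNN μs ω * f ω) * ∑ ω, wNN μs ω * g ω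
        ≤ (∑ ω, wNN μs ω) * ∑ ω, wNN μs ω * (f ω * g ω) := key
      _ = ∑ ω, wNN μs ω * (f ω * g ω) := by rw [htot, one_mul]
  · intro A hA B hB
    refine ⟨fun ω ω' h hω => ⟨hA ω ω' h hω.1, hB ω ω' h hω.2⟩, fun ω ω' h hω => ?_⟩
    rcases hω with h1 | h2
    · exact Or.inl (hA ω ω' h h1)
    · exact Or.inr (hB ω ω' h h2)
end
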